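/- For any Hermiticity-preserving map Φ, the base norm with respect to CPTNI maps is upper bounded as ‖Φ‖_CPTNI ≤ λ_max(Tr_B (J_Φ)₊) + λ_max(Tr_B (J_Φ)₋), where λ_max denotes the largest eigenvalue. -/

import Mathlib

open Matrix Kronecker ComplexOrder

/-- Singular values of a square complex matrix. -/
noncomputable def singVals {n : Type*} [Fintype n] [DecidableEq n]
    (X : Matrix n n ℂ) : n → ℝ :=
  fun i => Real.sqrt ((Matrix.isHermitian_mul_conjTranspose_self X).eigenvalues i)

/-- Trace norm (Schatten 1-norm): sum of singular values; for Hermitian `X` this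
is the sum of the absolute values of the eigenvalues. -/
noncomputable def traceNorm {n : Type*} [Fintype n] [DecidableEq n]
    (X : Matrix n n ℂ) : ℝ :=
  ∑ i, singVals X i

/-- Operator norm (Schatten ∞-norm): largest singular value. -/
noncomputable def opNorm {n : Type*} [Fintype n] [DecidableEq n]
    (X : Matrix n n ℂ) : ℝ :=
  ⨆ i, singVals X i

/-- A density operator: positive semidefinite with unit trace. -/
def Density {n : Type*} [Fintype n] (ρ : Matrix n n ℂ) : Prop :=
  ρ.PosSemidef ∧ ρ.trace = 1

/-- Loewner order: `X ⊑ Y` iff `Y - X` is positive semidefinite. -/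
def Loewner {n : Type*} [Fintype n] (X Y : Matrix n n ℂ) : Prop :=
  (Y - X).PosSemidef

/-- Partial trace over the second (B) factor. -/
noncomputable def ptraceB {a b : Type*} [Fintype b] (M : Matrix (a × b) (a × b) ℂ) :
    Matrix a a ℂ :=
  Matrix.of fun i j => ∑ k, M (i, k) (j, k)

/-- Choi matrix of a linear map on matrices. -/
noncomputable def choi {da db : ℕ}
    (Φ : Matrix (Fin da) (Fin da) ℂ →ₗ[ℂ] Matrix (Fin db) (Fin db) ℂ) :
    Matrix (Fin da × Fin db) (Fin da × Fin db) ℂ :=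
  Matrix.of fun p q => Φ (Matrix.single p.1 q.1 1) p.2 q.2

/-- Completely positive and trace non-increasing, via the Choi matrix. -/
def IsCPTNI {da db : ℕ}
    (Φ : Matrix (Fin da) (Fin da) ℂ →ₗ[ℂ] Matrix (Fin db) (Fin db) ℂ) : Prop :=
  (choi Φ).PosSemidef ∧ Loewner (ptraceB (choi Φ)) 1

/-- Completely positive and trace preserving, via the Choi matrix. -/
def IsCPTP {da db : ℕ}
    (Φ : Matrix (Fin da) (Fin da) ℂ →ₗ[ℂ] Matrix (Fin db) (Fin db) ℂ) : Prop :=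
  (choi Φ).PosSemidef ∧ ptraceB (choi Φ) = 1

/-- The map `id_A ⊗ Φ` acting on operators on `A ⊗ A`. -/
noncomputable def idTensor {da db : ℕ}
    (Φ : Matrix (Fin da) (Fin da) ℂ →ₗ[ℂ] Matrix (Fin db) (Fin db) ℂ)
    (M : Matrix (Fin da × Fin da) (Fin da × Fin da) ℂ) :
    Matrix (Fin da × Fin db) (Fin da × Fin db) ℂ :=
  Matrix.of fun p q => Φ (Matrix.of fun k l => M (p.1, k) (q.1, l)) p.2 q.2

/-- Diamond norm: `max_ρ ‖(id ⊗ Φ)(ρ)‖₁` over bipartite density operators. -/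
noncomputable def diamondNorm {da db : ℕ}
    (Φ : Matrix (Fin da) (Fin da) ℂ →ₗ[ℂ] Matrix (Fin db) (Fin db) ℂ) : ℝ :=
  sSup {x : ℝ | ∃ ρ : Matrix (Fin da × Fin da) (Fin da × Fin da) ℂ,
    Density ρ ∧ x = traceNorm (idTensor Φ ρ)}

/-- Base norm with respect to CPTNI maps. -/
noncomputable def cptniNorm {da db : ℕ}
    (Φ : Matrix (Fin da) (Fin da) ℂ →ₗ[ℂ] Matrix (Fin db) (Fin db) ℂ) : ℝ :=
  sInf {s : ℝ | ∃ lp lm : ℝ, ∃ Λp Λm :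
      Matrix (Fin da) (Fin da) ℂ →ₗ[ℂ] Matrix (Fin db) (Fin db) ℂ,
    0 ≤ lp ∧ 0 ≤ lm ∧ IsCPTNI Λp ∧ IsCPTNI Λm ∧
    Φ = (lp : ℂ) • Λp - (lm : ℂ) • Λm ∧ s = lp + lm}


open scoped ComplexInnerProductSpace

lemma psd_smul_real {n : Type*} [Fintype n] [DecidableEq n] {M : Matrix n n ℂ}
    (hM : M.PosSemidef) {r : ℝ} (hr : 0 ≤ r) : ((r : ℂ) • M).PosSemidef := by
  refine Matrix.PosSemidef.of_dotProduct_mulVec_nonneg ?_ ?_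
  · simpa [Matrix.IsHermitian, conjTranspose_smul, Complex.star_def, Complex.conj_ofReal]
      using congrArg (fun X => (r : ℂ) • X) hM.1.eq
  · intro x
    rw [smul_mulVec, dotProduct_smul]
    exact mul_nonneg (by exact_mod_cast Complex.zero_le_real.mpr hr) (hM.dotProduct_mulVec_nonneg x)

lemma ptraceB_smul {a b : Type*} [Fintype b] (c : ℂ) (M : Matrix (a × b) (a × b) ℂ) :
    ptraceB (c • M) = c • ptraceB M := by
  ext i j
  simp [ptraceB, Finset.mul_sum]

lemma ptraceB_psd {a b : Type*} [Fintype a] [Fintype b] [DecidableEq a] [DecidableEq b]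
    {M : Matrix (a × b) (a × b) ℂ} (hM : M.PosSemidef) : (ptraceB M).PosSemidef := by
  refine Matrix.PosSemidef.of_dotProduct_mulVec_nonneg ?_ ?_
  · ext i j
    simp only [Matrix.conjTranspose_apply, ptraceB, Matrix.of_apply, star_sum]
    refine Finset.sum_congr rfl fun k _ => ?_
    have := congrFun (congrFun hM.1.eq (i, k)) (j, k)
    simpa [Matrix.conjTranspose_apply] using this
  · intro x
    set y : b → (a × b → ℂ) := fun k p => if p.2 = k then x p.1 else 0 with hy
    have each : ∀ k : b, dotProduct (star (y k)) (M *ᵥ y k)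
        = ∑ i, ∑ j, star (x i) * (M (i, k) (j, k) * x j) := by
      intro k
      have h1 : ∀ p : a × b, (M *ᵥ y k) p = ∑ j, M p (j, k) * x j := by
        intro p
        simp [mulVec, dotProduct, hy, Fintype.sum_prod_type, mul_ite, mul_zero]
      simp only [dotProduct, Pi.star_apply, h1]
      simp only [hy, Fintype.sum_prod_type]
      simp [apply_ite (star : ℂ → ℂ), Finset.mul_sum]
    have lhs_eq : dotProduct (star x) (ptraceB M *ᵥ x)
        = ∑ i, ∑ j, ∑ k, star (x i) * (M (i, k) (j, k) * x j) := by
      simp only [dotProduct, mulVec, ptraceB, Matrix.of_apply, Pi.star_apply,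
        Finset.sum_mul, Finset.mul_sum]
    have rhs_eq : ∑ k : b, dotProduct (star (y k)) (M *ᵥ y k)
        = ∑ i, ∑ j, ∑ k, star (x i) * (M (i, k) (j, k) * x j) := by
      rw [Finset.sum_congr rfl fun k _ => each k, Finset.sum_comm]
      exact Finset.sum_congr rfl fun i _ => Finset.sum_comm
    rw [lhs_eq, ← rhs_eq]
    exact Finset.sum_nonneg fun k _ => hM.dotProduct_mulVec_nonneg _

lemma opNorm_nonneg {n : Type*} [Fintype n] [DecidableEq n] (X : Matrix n n ℂ) :
    0 ≤ opNorm X :=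
  Real.iSup_nonneg fun i => Real.sqrt_nonneg _

lemma sq_psd_le {n : Type*} [Fintype n] [DecidableEq n] (A : Matrix n n ℂ) :
    (((opNorm A : ℂ) ^ 2) • 1 - A * Aᴴ).PosSemidef := by
  set c := opNorm A with hc
  have hc0 : 0 ≤ c := opNorm_nonneg A
  have hB := Matrix.isHermitian_mul_conjTranspose_self A
  set μ := hB.eigenvalues with hμ
  have hμ0 : ∀ i, 0 ≤ μ i := (Matrix.posSemidef_self_mul_conjTranspose A).eigenvalues_nonneg
  have hμc : ∀ i, μ i ≤ c ^ 2 := by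
    intro i
    have h1 : Real.sqrt (μ i) ≤ c :=
      le_ciSup (Set.Finite.bddAbove (Set.finite_range (singVals A))) i
    have := pow_le_pow_left₀ (Real.sqrt_nonneg (μ i)) h1 2
    rwa [Real.sq_sqrt (hμ0 i)] at this
  set U : Matrix n n ℂ := (hB.eigenvectorUnitary : Matrix n n ℂ) with hU
  have hUU : U * star U = 1 := mem_unitaryGroup_iff.mp hB.eigenvectorUnitary.2
  have key : ((c : ℂ) ^ 2) • 1 - A * Aᴴ
      = U * diagonal (fun i => ((c ^ 2 - μ i : ℝ) : ℂ)) * star U := by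
    have hsp := hB.spectral_theorem
    have hdiag : diagonal (fun i => ((c ^ 2 - μ i : ℝ) : ℂ))
        = ((c : ℂ) ^ 2) • 1 - diagonal (RCLike.ofReal ∘ μ) := by
      ext i j
      by_cases h : i = j <;>
        simp [Matrix.diagonal_apply, Matrix.one_apply, h, sub_nonneg] <;> push_cast <;> ring
    rw [hdiag, mul_sub, sub_mul, mul_smul_comm, smul_mul_assoc, mul_one, hUU, hsp, Unitary.conjStarAlgAut_apply]
  rw [key]
  refine (Matrix.PosSemidef.diagonal fun i => ?_).mul_mul_conjTranspose_same U
  show (0 : ℂ) ≤ _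
  rw [← Complex.ofReal_zero, Complex.real_le_real]
  linarith [hμc i]

lemma psd_le_opNorm_smul_one {n : Type*} [Fintype n] [DecidableEq n] {A : Matrix n n ℂ}
    (hA : A.PosSemidef) : ((opNorm A : ℂ) • 1 - A).PosSemidef := by
  set c := opNorm A with hc
  have hc0 : 0 ≤ c := opNorm_nonneg A
  refine Matrix.PosSemidef.of_dotProduct_mulVec_nonneg ?_ ?_
  · have : ((c : ℂ) • (1 : Matrix n n ℂ) - A)ᴴ = (c : ℂ) • 1 - A := by
      rw [conjTranspose_sub, conjTranspose_smul, conjTranspose_one, hA.1.eq,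
        Complex.star_def, Complex.conj_ofReal]
    exact this
  · intro x
    -- real quantities
    set x' : EuclideanSpace ℂ n := (WithLp.equiv 2 _).symm x with hx'
    set Ax' : EuclideanSpace ℂ n := (WithLp.equiv 2 _).symm (A *ᵥ x) with hAx'
    have hinner : (inner ℂ x' Ax' : ℂ) = dotProduct (star x) (A *ᵥ x) :=
      (EuclideanSpace.inner_toLp_toLp x (A *ᵥ x)).trans (dotProduct_comm _ _)
    have hxx : (inner ℂ x' x' : ℂ) = dotProduct (star x) x :=
      (EuclideanSpace.inner_toLp_toLp x x).trans (dotProduct_comm _ _)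
    have hAA : (inner ℂ Ax' Ax' : ℂ) = dotProduct (star x) ((A * Aᴴ) *ᵥ x) := by
      rw [show (inner ℂ Ax' Ax' : ℂ) = dotProduct (star (A *ᵥ x)) (A *ᵥ x) from
        (EuclideanSpace.inner_toLp_toLp _ _).trans (dotProduct_comm _ _), star_mulVec, ← dotProduct_mulVec,
        mulVec_mulVec]
      rw [show Aᴴ * A = A * Aᴴ by rw [hA.1.eq]]
    have hnx : ‖x'‖ ^ 2 = RCLike.re (inner ℂ x' x' : ℂ) := (inner_self_eq_norm_sq _).symm
    have hnA : ‖Ax'‖ ^ 2 = RCLike.re (inner ℂ Ax' Ax' : ℂ) := (inner_self_eq_norm_sq _).symm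
    have hq0 : 0 ≤ dotProduct (star x) (A *ᵥ x) := hA.dotProduct_mulVec_nonneg x
    have hs0 : 0 ≤ dotProduct (star x) x := by
      simpa using (Matrix.PosSemidef.one (n := n) (R := ℂ)).dotProduct_mulVec_nonneg x
    -- bound on ‖Ax'‖
    have hsq := (sq_psd_le A).dotProduct_mulVec_nonneg x
    have hsq' : RCLike.re (dotProduct (star x) ((A * Aᴴ) *ᵥ x))
        ≤ c ^ 2 * RCLike.re (dotProduct (star x) x) := by
      rw [sub_mulVec, smul_mulVec, one_mulVec, dotProduct_sub, dotProduct_smul,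
        smul_eq_mul] at hsq
      have := (Complex.le_def.mp hsq).1
      simp only [Complex.zero_re, Complex.sub_re, Complex.mul_re, Complex.ofReal_im,
        RCLike.re_to_complex] at this ⊢
      have hcim : ((c : ℂ) ^ 2).im = 0 := by simp [pow_two, Complex.mul_im]
      have hcre : ((c : ℂ) ^ 2).re = c ^ 2 := by simp [pow_two, Complex.mul_re]
      rw [hcim, hcre] at this
      linarith
    have hAxle : ‖Ax'‖ ≤ c * ‖x'‖ := by
      have h2 : ‖Ax'‖ ^ 2 ≤ (c * ‖x'‖) ^ 2 := by
        rw [hnA, hAA, mul_pow, hnx, hxx]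
        exact hsq'
      have := Real.sqrt_le_sqrt h2
      rwa [Real.sqrt_sq (norm_nonneg _), Real.sqrt_sq (by positivity)] at this
    -- conclude
    rw [sub_mulVec, smul_mulVec, one_mulVec, dotProduct_sub, dotProduct_smul,
      smul_eq_mul]
    rw [sub_nonneg, Complex.le_def]
    constructor
    · have h1 : (dotProduct (star x) (A *ᵥ x)).re ≤ ‖dotProduct (star x) (A *ᵥ x)‖ :=
        Complex.re_le_norm _
      have h2 : ‖dotProduct (star x) (A *ᵥ x)‖ ≤ ‖x'‖ * ‖Ax'‖ := by
        rw [← hinner]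
        exact norm_inner_le_norm x' Ax'
      have h3 : ‖x'‖ * ‖Ax'‖ ≤ ‖x'‖ * (c * ‖x'‖) :=
        mul_le_mul_of_nonneg_left hAxle (norm_nonneg _)
      have h4 : ‖x'‖ * (c * ‖x'‖) = c * ((dotProduct (star x) x).re) := by
        rw [show ‖x'‖ * (c * ‖x'‖) = c * ‖x'‖ ^ 2 by ring, hnx, hxx]
        simp [RCLike.re_to_complex]
      have h5 : ((c : ℂ) * dotProduct (star x) x).re = c * (dotProduct (star x) x).re := by
        simp [Complex.mul_re]
      linarith
    · have him : (dotProduct (star x) (A *ᵥ x)).im = 0 := ((Complex.le_def.mp hq0).2).symm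
      have him2 : (dotProduct (star x) x).im = 0 := ((Complex.le_def.mp hs0).2).symm
      simp [Complex.mul_im, him, him2]

noncomputable def ofChoi {da db : ℕ} (J : Matrix (Fin da × Fin db) (Fin da × Fin db) ℂ) :
    Matrix (Fin da) (Fin da) ℂ →ₗ[ℂ] Matrix (Fin db) (Fin db) ℂ where
  toFun X := Matrix.of fun r s => ∑ k, ∑ l, X k l * J (k, r) (l, s)
  map_add' X Y := by
    ext r s
    simp [add_mul, Finset.sum_add_distrib]
  map_smul' c X := by
    ext r s
    simp [Finset.mul_sum, mul_assoc]

lemma choi_ofChoi {da db : ℕ} (J : Matrix (Fin da × Fin db) (Fin da × Fin db) ℂ) :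
    choi (ofChoi J) = J := by
  ext p q
  simp only [choi, ofChoi, LinearMap.coe_mk, AddHom.coe_mk, Matrix.of_apply,
    Matrix.single, ite_mul, one_mul, zero_mul, ite_and]
  rw [Finset.sum_eq_single p.1]
  · rw [Finset.sum_eq_single q.1]
    · simp
    · intro l _ hl
      rw [if_pos rfl, if_neg (fun h => hl h.symm)]
    · simp
  · intro k _ hk
    refine Finset.sum_eq_zero fun l _ => ?_
    rw [if_neg (fun h => hk h.symm)]
  · simp

lemma ofChoi_choi {da db : ℕ}
    (Φ : Matrix (Fin da) (Fin da) ℂ →ₗ[ℂ] Matrix (Fin db) (Fin db) ℂ) :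
    ofChoi (choi Φ) = Φ := by
  apply LinearMap.ext; intro X
  ext r s
  show ∑ k, ∑ l, X k l * (Φ (Matrix.single k l 1)) r s = Φ X r s
  conv_rhs => rw [matrix_eq_sum_single X]
  rw [map_sum, Matrix.sum_apply]
  refine Finset.sum_congr rfl fun k _ => ?_
  rw [map_sum, Matrix.sum_apply]
  refine Finset.sum_congr rfl fun l _ => ?_
  rw [show Matrix.single k l (X k l) = X k l • Matrix.single k l 1 by
    rw [smul_single, smul_eq_mul, mul_one], _root_.map_smul]
  simp

lemma ofChoi_sub {da db : ℕ} (J₁ J₂ : Matrix (Fin da × Fin db) (Fin da × Fin db) ℂ) :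
    ofChoi (J₁ - J₂) = ofChoi J₁ - ofChoi J₂ := by
  apply LinearMap.ext; intro X
  ext r s
  simp [ofChoi, sub_mul, mul_sub, Finset.sum_sub_distrib]

lemma ofChoi_smul {da db : ℕ} (c : ℂ) (J : Matrix (Fin da × Fin db) (Fin da × Fin db) ℂ) :
    ofChoi (c • J) = c • ofChoi J := by
  apply LinearMap.ext; intro X
  ext r s
  simp only [ofChoi, LinearMap.coe_mk, AddHom.coe_mk, LinearMap.smul_apply,
    Matrix.smul_apply, Matrix.of_apply, smul_eq_mul, Finset.mul_sum]
  exact Finset.sum_congr rfl fun k _ => Finset.sum_congr rfl fun l _ => by ring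

set_option maxHeartbeats 2000000 in
/-- `‖Φ‖_CPTNI ≤ λ_max(Tr_B (J_Φ)₊) + λ_max(Tr_B (J_Φ)₋)` for the
Jordan decomposition `J_Φ = P - N` (for psd operators `λ_max` is the operator
norm). -/
theorem cptniNorm_le_lambdaMax_sum {da db : ℕ}
    (Φ : Matrix (Fin da) (Fin da) ℂ →ₗ[ℂ] Matrix (Fin db) (Fin db) ℂ) (hH : (choi Φ).IsHermitian)
    (P N : Matrix (Fin da × Fin db) (Fin da × Fin db) ℂ)
    (hP : P.PosSemidef) (hN : N.PosSemidef)
    (hdec : choi Φ = P - N) (horth : P * N = 0) :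
    cptniNorm Φ ≤ opNorm (ptraceB P) + opNorm (ptraceB N) := by
  have hPpt := ptraceB_psd hP
  have hNpt := ptraceB_psd hN
  refine le_of_forall_pos_le_add fun ε hε => ?_
  set oP := opNorm (ptraceB P) with hoP
  set oN := opNorm (ptraceB N) with hoN
  have hoP0 : 0 ≤ oP := opNorm_nonneg _
  have hoN0 : 0 ≤ oN := opNorm_nonneg _
  set lp : ℝ := oP + ε / 2 with hlp
  set lm : ℝ := oN + ε / 2 with hlm
  have hlp0 : 0 < lp := by positivity
  have hlm0 : 0 < lm := by positivity
  -- Loewner bounds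
  have hPle : ((lp : ℂ) • 1 - ptraceB P).PosSemidef := by
    have heq : (lp : ℂ) • (1 : Matrix (Fin da) (Fin da) ℂ) - ptraceB P
        = ((oP : ℂ) • 1 - ptraceB P) + ((ε / 2 : ℝ) : ℂ) • 1 := by
      rw [show ((lp : ℝ) : ℂ) = (oP : ℂ) + ((ε / 2 : ℝ) : ℂ) by push_cast [hlp]; ring,
        add_smul]
      abel
    rw [heq]
    exact (psd_le_opNorm_smul_one hPpt).add (psd_smul_real Matrix.PosSemidef.one (by positivity))
  have hNle : ((lm : ℂ) • 1 - ptraceB N).PosSemidef := by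
    have heq : (lm : ℂ) • (1 : Matrix (Fin da) (Fin da) ℂ) - ptraceB N
        = ((oN : ℂ) • 1 - ptraceB N) + ((ε / 2 : ℝ) : ℂ) • 1 := by
      rw [show ((lm : ℝ) : ℂ) = (oN : ℂ) + ((ε / 2 : ℝ) : ℂ) by push_cast [hlm]; ring,
        add_smul]
      abel
    rw [heq]
    exact (psd_le_opNorm_smul_one hNpt).add (psd_smul_real Matrix.PosSemidef.one (by positivity))
  -- the CPTNI maps
  have hcptni : ∀ (Q : Matrix (Fin da × Fin db) (Fin da × Fin db) ℂ), Q.PosSemidef →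
      ∀ (l : ℝ), 0 < l → (((l : ℂ) • 1 - ptraceB Q).PosSemidef) →
      IsCPTNI (ofChoi (((l⁻¹ : ℝ) : ℂ) • Q)) := by
    intro Q hQ l hl hle
    refine ⟨?_, ?_⟩
    · rw [choi_ofChoi]
      exact psd_smul_real hQ (inv_nonneg.mpr hl.le)
    · show (1 - ptraceB (choi (ofChoi _))).PosSemidef
      rw [choi_ofChoi, ptraceB_smul]
      have heq : (1 : Matrix (Fin da) (Fin da) ℂ) - ((l⁻¹ : ℝ) : ℂ) • ptraceB Q
          = ((l⁻¹ : ℝ) : ℂ) • ((l : ℂ) • 1 - ptraceB Q) := by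
        rw [smul_sub, smul_smul]
        rw [show ((l⁻¹ : ℝ) : ℂ) * (l : ℂ) = ((l⁻¹ * l : ℝ) : ℂ) by push_cast; ring,
          inv_mul_cancel₀ hl.ne']
        simp
      rw [heq]
      exact psd_smul_real hle (inv_nonneg.mpr hl.le)
  -- decomposition of Φ
  have hΦ : Φ = (lp : ℂ) • ofChoi (((lp⁻¹ : ℝ) : ℂ) • P)
      - (lm : ℂ) • ofChoi (((lm⁻¹ : ℝ) : ℂ) • N) := by
    rw [← ofChoi_smul, ← ofChoi_smul, ← ofChoi_sub, smul_smul, smul_smul]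
    rw [show (lp : ℂ) * ((lp⁻¹ : ℝ) : ℂ) = ((lp * lp⁻¹ : ℝ) : ℂ) by push_cast; ring,
      show (lm : ℂ) * ((lm⁻¹ : ℝ) : ℂ) = ((lm * lm⁻¹ : ℝ) : ℂ) by push_cast; ring,
      mul_inv_cancel₀ hlp0.ne', mul_inv_cancel₀ hlm0.ne']
    push_cast
    rw [one_smul, one_smul, ← hdec, ofChoi_choi]
  -- conclude via sInf
  have hbdd : BddBelow {s : ℝ | ∃ a b : ℝ, ∃ Λp Λm :
      Matrix (Fin da) (Fin da) ℂ →ₗ[ℂ] Matrix (Fin db) (Fin db) ℂ,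
      0 ≤ a ∧ 0 ≤ b ∧ IsCPTNI Λp ∧ IsCPTNI Λm ∧
      Φ = (a : ℂ) • Λp - (b : ℂ) • Λm ∧ s = a + b} := by
    refine ⟨0, fun s hs => ?_⟩
    obtain ⟨a, b, Λ₁, Λ₂, ha, hb, _, _, _, hsum⟩ := hs
    rw [hsum]; linarith
  have hmem : oP + oN + ε ∈ {s : ℝ | ∃ a b : ℝ, ∃ Λp Λm :
      Matrix (Fin da) (Fin da) ℂ →ₗ[ℂ] Matrix (Fin db) (Fin db) ℂ,
      0 ≤ a ∧ 0 ≤ b ∧ IsCPTNI Λp ∧ IsCPTNI Λm ∧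
      Φ = (a : ℂ) • Λp - (b : ℂ) • Λm ∧ s = a + b} :=
    ⟨lp, lm, ofChoi (((lp⁻¹ : ℝ) : ℂ) • P), ofChoi (((lm⁻¹ : ℝ) : ℂ) • N),
      hlp0.le, hlm0.le, hcptni P hP lp hlp0 hPle, hcptni N hN lm hlm0 hNle, hΦ, by
        rw [hlp, hlm]; ring⟩
  exact csInf_le hbdd hmem
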